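/- In a unital C*-algebra A, the set of extreme points of the closed unit ball is norm closed. -/

import Mathlib

section Aux

variable {A : Type*} [CStarAlgebra A] [PartialOrder A] [StarOrderedRing A]

private lemma star_mul_self_le_one' {y : A} (h : ‖y‖ ≤ 1) : star y * y ≤ 1 := by
  have h0 : (0:A) ≤ star y * y := star_mul_self_nonneg y
  rw [← CStarAlgebra.norm_le_one_iff_of_nonneg _ h0, CStarRing.norm_star_mul_self]
  nlinarith [norm_nonneg y]

private lemma norm_le_one_of_star_mul_self' {y : A} (h : star y * y ≤ 1) : ‖y‖ ≤ 1 := by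
  have h0 : (0:A) ≤ star y * y := star_mul_self_nonneg y
  have := (CStarAlgebra.norm_le_one_iff_of_nonneg _ h0).mpr h
  rw [CStarRing.norm_star_mul_self] at this
  nlinarith [norm_nonneg y]

private lemma eq_zero_of_star_mul_self' {c : A} (h : star c * c = 0) : c = 0 := by
  rw [← norm_eq_zero]
  have := CStarRing.norm_star_mul_self (x := c)
  rw [h, norm_zero] at this
  nlinarith [norm_nonneg c]

private lemma norm_proj_le_one' {p : A} (hsa : IsSelfAdjoint p) (h : p * p = p) : ‖p‖ ≤ 1 := by
  have h2 : ‖p‖ * ‖p‖ = ‖p‖ := by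
    conv_lhs => rw [← CStarRing.norm_star_mul_self (x := p), hsa.star_eq, h]
  nlinarith [norm_nonneg p]

/-- The unit `p` of a corner is an extreme point of its unit ball. -/
private lemma corner_extreme {p b : A} (hsa : IsSelfAdjoint p) (hp : p * p = p)
    (hcor : p * b * p = b) (hb : ‖b‖ ≤ 1) (hb2 : ‖p + p - b‖ ≤ 1) : b = p := by
  have hpb : p * b = b := by
    conv_lhs => rw [← hcor, ← mul_assoc, ← mul_assoc, hp]
    rw [hcor]
  have hbp : b * p = b := by
    conv_lhs => rw [← hcor, mul_assoc, hp]
    rw [hcor]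
  set c := p - b with hc
  have hb_eq : b = p - c := by rw [hc]; abel
  have hpc : p * c = c := by rw [hc, mul_sub, hp, hpb]
  have hcp : c * p = c := by rw [hc, sub_mul, hp, hbp]
  have hscp : star c * p = star c := by
    have := congrArg star hpc
    rwa [star_mul, hsa.star_eq] at this
  have hpsc : p * star c = star c := by
    have := congrArg star hcp
    rwa [star_mul, hsa.star_eq] at this
  -- first inequality
  have key : ∀ u : A, ‖u‖ ≤ 1 → p * u * p = u → star u * u ≤ p := by
    intro u hu hucor
    have hup : u * p = u := by
      conv_lhs => rw [← hucor, mul_assoc, hp]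
      rw [hucor]
    have hpsu : p * star u = star u := by
      have := congrArg star hup
      rwa [star_mul, hsa.star_eq] at this
    have h1 : star u * u ≤ 1 := star_mul_self_le_one' hu
    have h2 := star_left_conjugate_le_conjugate h1 p
    rw [hsa.star_eq, mul_one, hp] at h2
    calc star u * u = p * (star u * u) * p := by
          rw [← mul_assoc, hpsu, mul_assoc, hup]
      _ ≤ p := h2
  have e1 : star b * b ≤ p := key b hb hcor
  have hcor2 : p * (p + p - b) * p = p + p - b := by
    have : p * (p + p - b) * p = p * p * p + p * p * p - p * b * p := by noncomm_ring
    rw [this, hcor]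
    simp only [hp]
  have e2 : star (p + p - b) * (p + p - b) ≤ p := key _ hb2 hcor2
  -- rewrite in terms of c
  have hb2c : p + p - b = p + c := by rw [hc]; abel
  have exp1 : star b * b = p - c - star c + star c * c := by
    calc star b * b = (p - star c) * (p - c) := by rw [hb_eq, star_sub, hsa.star_eq]
      _ = p * p - p * c - star c * p + star c * c := by noncomm_ring
      _ = p - c - star c + star c * c := by simp only [hp, hpc, hscp]
  have exp2 : star (p + c) * (p + c) = p + c + star c + star c * c := by
    calc star (p + c) * (p + c) = (p + star c) * (p + c) := by rw [star_add, hsa.star_eq]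
      _ = p * p + p * c + star c * p + star c * c := by noncomm_ring
      _ = p + c + star c + star c * c := by simp only [hp, hpc, hscp]
  rw [exp1] at e1
  rw [hb2c, exp2] at e2
  have e1' : star c * c ≤ c + star c := by
    have := sub_le_sub_right e1 p
    calc star c * c = (p - c - star c + star c * c) - p + (c + star c) := by abel
      _ ≤ 0 + (c + star c) := by
          refine add_le_add_left ?_ _
          simpa using this
      _ = c + star c := by abel
  have e2' : c + star c ≤ -(star c * c) := by
    have := sub_le_sub_right e2 p
    calc c + star c = (p + c + star c + star c * c) - p + -(star c * c) := by abel
      _ ≤ 0 + -(star c * c) := by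
          refine add_le_add_left ?_ _
          simpa using this
      _ = -(star c * c) := by abel
  have hcc0 : star c * c ≤ 0 := by
    have h3 : star c * c ≤ -(star c * c) := e1'.trans e2'
    have h4 : (0:A) ≤ star c * c := star_mul_self_nonneg c
    calc star c * c = 0 + star c * c := by abel
      _ ≤ star c * c + star c * c := add_le_add_left h4 _
      _ = star c * c - -(star c * c) := by abel
      _ ≤ star c * c - star c * c := by exact sub_le_sub_left (le_trans h3 (le_refl _)) _
      _ = 0 := by abel
  have hcc : star c * c = 0 := le_antisymm hcc0 (star_mul_self_nonneg c)
  have : c = 0 := eq_zero_of_star_mul_self' hcc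
  rw [hb_eq, this, sub_zero]

/-- If `x` is a partial isometry and `y + z = x + x` with `y, z` in the unit ball, then
`y * (star x * x) = x`. -/
private lemma mul_proj {x y z : A} (h1 : x * star x * x = x) (hy : ‖y‖ ≤ 1) (hz : ‖z‖ ≤ 1)
    (hyz : y + z = x + x) : y * (star x * x) = x := by
  have hsa : IsSelfAdjoint (star x * x) := IsSelfAdjoint.star_mul_self x
  have hp : (star x * x) * (star x * x) = star x * x := by
    have e : (star x * x) * (star x * x) = star x * (x * star x * x) := by noncomm_ring
    rw [e, h1]
  have hxp : x * (star x * x) = x := by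
    have e : x * (star x * x) = x * star x * x := by noncomm_ring
    rw [e, h1]
  have hpsx : (star x * x) * star x = star x := by
    have := congrArg star hxp
    rwa [star_mul, hsa.star_eq] at this
  have hnp : ‖star x * x‖ ≤ 1 := norm_proj_le_one' hsa hp
  have hnx : ‖x‖ ≤ 1 := by
    have := CStarRing.norm_star_mul_self (x := x)
    nlinarith [norm_nonneg x]
  -- the corner elements
  have hbnorm : ∀ u : A, ‖u‖ ≤ 1 → ‖star x * u * (star x * x)‖ ≤ 1 := by
    intro u hu
    calc ‖star x * u * (star x * x)‖ ≤ ‖star x * u‖ * ‖star x * x‖ := norm_mul_le _ _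
      _ ≤ (‖star x‖ * ‖u‖) * ‖star x * x‖ :=
          mul_le_mul_of_nonneg_right (norm_mul_le _ _) (norm_nonneg _)
      _ ≤ 1 := by
          rw [norm_star]
          nlinarith [norm_nonneg x, norm_nonneg u, norm_nonneg (star x * x), hnp, hnx, hu,
            mul_nonneg (norm_nonneg x) (norm_nonneg u)]
  have hbcor : ∀ u : A, (star x * x) * (star x * u * (star x * x)) * (star x * x)
      = star x * u * (star x * x) := by
    intro u
    have e : (star x * x) * (star x * u * (star x * x)) * (star x * x)
        = ((star x * x) * star x) * u * ((star x * x) * (star x * x)) := by noncomm_ring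
    rw [e, hpsx, hp]
  have hsum : star x * y * (star x * x) + star x * z * (star x * x)
      = (star x * x) + (star x * x) := by
    have e : star x * y * (star x * x) + star x * z * (star x * x)
        = star x * (y + z) * (star x * x) := by noncomm_ring
    rw [e, hyz]
    have e2 : star x * (x + x) * (star x * x)
        = (star x * x) * (star x * x) + (star x * x) * (star x * x) := by noncomm_ring
    rw [e2, hp]
  -- apply the corner extremality
  have hb1 : star x * y * (star x * x) = star x * x := by
    apply corner_extreme hsa hp (hbcor y) (hbnorm y hy)
    have : (star x * x) + (star x * x) - star x * y * (star x * x)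
        = star x * z * (star x * x) := by rw [← hsum]; abel
    rw [this]
    exact hbnorm z hz
  -- now conclude y * p = x
  have hb1' : (star x * x) * star y * x = star x * x := by
    have := congrArg star hb1
    simp only [star_mul, star_star] at this
    rwa [← mul_assoc] at this
  have hyyp : (star x * x) * (star y * y) * (star x * x) ≤ star x * x := by
    have h2 := star_left_conjugate_le_conjugate (star_mul_self_le_one' hy) (star x * x)
    rwa [hsa.star_eq, mul_one, hp] at h2
  have hw : star (y * (star x * x) - x) * (y * (star x * x) - x)
      = (star x * x) * (star y * y) * (star x * x) - star x * x := by
    have hsw : star (y * (star x * x) - x) = (star x * x) * star y - star x := by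
      rw [star_sub, star_mul, hsa.star_eq]
    rw [hsw]
    have e : ((star x * x) * star y - star x) * (y * (star x * x) - x)
        = (star x * x) * (star y * y) * (star x * x)
          - ((star x * x) * star y * x) - (star x * y * (star x * x)) + star x * x := by
      noncomm_ring
    rw [e, hb1', hb1]
    abel
  have hw0 : star (y * (star x * x) - x) * (y * (star x * x) - x) ≤ 0 := by
    rw [hw]
    simpa using sub_le_sub_right hyyp (star x * x)
  have : y * (star x * x) - x = 0 := by
    apply eq_zero_of_star_mul_self'
    exact le_antisymm hw0 (star_mul_self_nonneg _)
  rwa [sub_eq_zero] at this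

/-- A partial isometry `x` with `(1 - x*x)A(1 - xx*) = 0` is an extreme point of the unit
ball. -/
private lemma extreme_of_alg {x : A} (h1 : x * star x * x = x)
    (h2 : ∀ a : A, (1 - star x * x) * a * (1 - x * star x) = 0) :
    ‖x‖ ≤ 1 ∧ ∀ y z : A, ‖y‖ ≤ 1 → ‖z‖ ≤ 1 → x = (2⁻¹ : ℝ) • (y + z) → y = x ∧ z = x := by
  have hsa : IsSelfAdjoint (star x * x) := IsSelfAdjoint.star_mul_self x
  have hp : (star x * x) * (star x * x) = star x * x := by
    have e : (star x * x) * (star x * x) = star x * (x * star x * x) := by noncomm_ring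
    rw [e, h1]
  have hxp : x * (star x * x) = x := by
    have e : x * (star x * x) = x * star x * x := by noncomm_ring
    rw [e, h1]
  have hnx : ‖x‖ ≤ 1 := by
    have h3 := CStarRing.norm_star_mul_self (x := x)
    have := norm_proj_le_one' hsa hp
    nlinarith [norm_nonneg x]
  refine ⟨hnx, fun y z hy hz hx => ?_⟩
  have hyz : y + z = x + x := by
    have : (2:ℝ) • x = (2:ℝ) • ((2⁻¹ : ℝ) • (y + z)) := congrArg _ hx
    rw [smul_smul] at this
    norm_num at this
    rw [← this, two_smul]
  have hyp : y * (star x * x) = x := mul_proj h1 hy hz hyz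
  have hzp : z * (star x * x) = x := mul_proj h1 hz hy (by rw [add_comm]; exact hyz)
  -- the star version
  have h1s : star x * star (star x) * star x = star x := by
    have := congrArg star h1
    simpa [star_mul, mul_assoc] using this
  have hyps : star y * (star (star x) * star x) = star x :=
    mul_proj (x := star x) (y := star y) (z := star z) h1s (by simpa using hy)
      (by simpa using hz) (by rw [← star_add, ← star_add, hyz])
  have hzps : star z * (star (star x) * star x) = star x :=
    mul_proj (x := star x) (y := star z) (z := star y) h1s (by simpa using hz)
      (by simpa using hy) (by rw [← star_add, ← star_add, add_comm z y, hyz])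
  have hqy : x * star x * y = x := by
    have := congrArg star hyps
    simp only [star_mul, star_star] at this
    exact this
  have hqz : x * star x * z = x := by
    have := congrArg star hzps
    simp only [star_mul, star_star] at this
    exact this
  have key : ∀ u : A, u * (star x * x) = x → x * star x * u = x → u = x := by
    intro u hup hqu
    have e : (1 - x * star x) * u * (1 - star x * x)
        = u - u * (star x * x) - (x * star x * u) + (x * star x * u) * (star x * x) := by
      noncomm_ring
    rw [hup, hqu, hxp] at e
    have e2 : (1 - x * star x) * u * (1 - star x * x) = u - x := by rw [e]; abel
    have h3 := congrArg star (h2 (star u))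
    simp only [star_mul, star_star, star_sub, star_one, star_zero] at h3
    rw [← mul_assoc, e2] at h3
    rwa [sub_eq_zero] at h3
  exact ⟨key y hyp hqy, key z hzp hqz⟩

/-- An extreme point of the unit ball is a partial isometry satisfying the Kadison
condition. -/
private lemma alg_of_extreme {x : A} (hx : ‖x‖ ≤ 1)
    (hext : ∀ y z : A, ‖y‖ ≤ 1 → ‖z‖ ≤ 1 → x = (2⁻¹ : ℝ) • (y + z) → y = x ∧ z = x) :
    x * star x * x = x ∧ ∀ a : A, (1 - star x * x) * a * (1 - x * star x) = 0 := by
  have hsa : IsSelfAdjoint (star x * x) := IsSelfAdjoint.star_mul_self x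
  have h0a : (0:A) ≤ star x * x := star_mul_self_nonneg x
  have hna : ‖star x * x‖ ≤ 1 := by
    rw [CStarRing.norm_star_mul_self]; nlinarith [norm_nonneg x]
  have hspec : ∀ t ∈ spectrum ℝ (star x * x), 0 ≤ t ∧ t ≤ 1 := by
    intro t ht
    refine ⟨spectrum_nonneg_of_nonneg h0a ht, ?_⟩
    obtain (h|h) := subsingleton_or_nontrivial A
    · exact (spectrum.mem_iff.mp ht (isUnit_of_subsingleton _)).elim
    calc t ≤ ‖t‖ := Real.le_norm_self t
      _ ≤ ‖star x * x‖ := spectrum.norm_le_norm_of_mem ht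
      _ ≤ 1 := hna
  set f : ℝ → ℝ := fun s => (s - s^2)/4 with hf
  have hfc : Continuous f := by fun_prop
  set b : A := cfc f (star x * x) with hb
  have hbsa : IsSelfAdjoint b := cfc_predicate f (star x * x)
  -- the two perturbations
  have hcfc : ∀ g : ℝ → ℝ, Continuous g →
      star (x * cfc g (star x * x)) * (x * cfc g (star x * x))
        = cfc (fun s => g s * s * g s) (star x * x) := by
    intro g hg
    have hgsa : IsSelfAdjoint (cfc g (star x * x)) := cfc_predicate g (star x * x)
    have e1 : star (x * cfc g (star x * x)) * (x * cfc g (star x * x))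
        = cfc g (star x * x) * (star x * x) * cfc g (star x * x) := by
      rw [star_mul, hgsa.star_eq]
      noncomm_ring
    rw [e1, cfc_mul _ _ (star x * x) (by fun_prop) (by fun_prop),
      cfc_mul _ _ (star x * x) (by fun_prop) (by fun_prop), cfc_id' ℝ (star x * x)]
  have hnorm_pert : ∀ g : ℝ → ℝ, Continuous g →
      (∀ t ∈ spectrum ℝ (star x * x), |g t * t * g t| ≤ 1) →
      ‖x * cfc g (star x * x)‖ ≤ 1 := by
    intro g hg hgb
    have h1 : ‖star (x * cfc g (star x * x)) * (x * cfc g (star x * x))‖ ≤ 1 := by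
      rw [hcfc g hg]
      exact norm_cfc_le zero_le_one fun t ht => by rw [Real.norm_eq_abs]; exact hgb t ht
    rw [CStarRing.norm_star_mul_self] at h1
    nlinarith [norm_nonneg (x * cfc g (star x * x))]
  have hyn : ‖x * cfc (fun s => 1 + f s) (star x * x)‖ ≤ 1 := by
    refine hnorm_pert _ (by fun_prop) fun t ht => ?_
    obtain ⟨ht0, ht1⟩ := hspec t ht
    rw [hf, abs_le]
    constructor
    · nlinarith [sq_nonneg (1 + (t - t^2)/4), mul_nonneg ht0 (sq_nonneg (1 + (t - t^2)/4))]
    · nlinarith [sq_nonneg (1-t), sq_nonneg t, mul_nonneg ht0 (sub_nonneg.mpr ht1),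
        sq_nonneg (t*(1-t)), mul_nonneg (mul_nonneg ht0 ht0) (sub_nonneg.mpr ht1)]
  have hzn : ‖x * cfc (fun s => 1 + -(f s)) (star x * x)‖ ≤ 1 := by
    refine hnorm_pert _ (by fun_prop) fun t ht => ?_
    obtain ⟨ht0, ht1⟩ := hspec t ht
    rw [hf, abs_le]
    constructor
    · nlinarith [mul_nonneg ht0 (sq_nonneg (1 - (t-t^2)/4))]
    · nlinarith [mul_nonneg ht0 (sub_nonneg.mpr ht1), sq_nonneg (1 - (t-t^2)/4),
        mul_nonneg ht0 (sq_nonneg (1 - (t-t^2)/4))]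
  have hcfc_plus : cfc (fun s => 1 + f s) (star x * x) = 1 + b := by
    rw [cfc_const_add 1 f (star x * x) (by fun_prop) hsa, map_one, hb]
  have hcfc_minus : cfc (fun s => 1 + -(f s)) (star x * x) = 1 - b := by
    rw [cfc_const_add 1 _ (star x * x) (by fun_prop) hsa, map_one,
      cfc_neg f (star x * x), hb, sub_eq_add_neg]
  have hxsum : x = (2⁻¹ : ℝ) • (x * (1 + b) + x * (1 - b)) := by
    have e : x * (1 + b) + x * (1 - b) = x + x := by noncomm_ring
    rw [e, ← two_smul ℝ x, smul_smul]
    norm_num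
  have hy_eq : x * (1 + b) = x := by
    refine (hext _ _ ?_ ?_ hxsum).1
    · rw [← hcfc_plus]; exact hyn
    · rw [← hcfc_minus]; exact hzn
  have hxb : x * b = 0 := by
    have := hy_eq
    rw [mul_add, mul_one] at this
    simpa using this
  -- consequently the spectrum is contained in {0, 1}
  have hm0 : cfc (fun s => f s * s * f s) (star x * x) = 0 := by
    rw [← hcfc f hfc, ← hb, hxb]
    simp
  have hspec01 : ∀ t ∈ spectrum ℝ (star x * x), (t - 1) * t * (t - 1) = 0 := by
    intro t ht
    obtain ⟨ht0, ht1⟩ := hspec t ht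
    have hft : f t * t * f t = 0 := by
      have h2 := norm_apply_le_norm_cfc (fun s => f s * s * f s) (star x * x) ht
        ((hfc.mul continuous_id).mul hfc).continuousOn hsa
      rw [hm0, norm_zero] at h2
      exact norm_le_zero_iff.mp h2
    rw [hf] at hft
    simp only at hft
    have h3 : (t * (1-t)) ^2 * t = 0 := by nlinarith [sq_nonneg (t*(1-t))]
    have h2 : t * (1-t) = 0 ∨ t = 0 := by
      rcases mul_eq_zero.mp h3 with h' | h'
      · exact Or.inl ((pow_eq_zero_iff two_ne_zero).mp h')
      · exact Or.inr h'
    rcases h2 with h' | h'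
    · rcases mul_eq_zero.mp h' with h'' | h'' <;> nlinarith
    · rw [h']; ring
  have hcfc01 : cfc (fun s : ℝ => (s - 1) * s * (s - 1)) (star x * x) = 0 := by
    rw [← norm_eq_zero]
    refine le_antisymm (norm_cfc_le le_rfl fun t ht => ?_) (norm_nonneg _)
    rw [hspec01 t ht, norm_zero]
  have hcfc01' : ((star x * x) - 1) * (star x * x) * ((star x * x) - 1) = 0 := by
    have e1 : cfc (fun s : ℝ => s - 1) (star x * x) = (star x * x) - 1 := by
      rw [show (fun s : ℝ => s - 1) = (fun s : ℝ => (fun s : ℝ => s) s - (fun _ : ℝ => 1) s)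
        from rfl, cfc_sub _ _ (star x * x) (by fun_prop) (by fun_prop),
        cfc_id' ℝ (star x * x), cfc_const (1 : ℝ) (star x * x) hsa, map_one]
    calc ((star x * x) - 1) * (star x * x) * ((star x * x) - 1)
        = cfc (fun s : ℝ => s - 1) (star x * x) * cfc (fun s : ℝ => s) (star x * x)
          * cfc (fun s : ℝ => s - 1) (star x * x) := by
          rw [e1, cfc_id' ℝ (star x * x)]
      _ = cfc (fun s : ℝ => (s - 1) * s * (s - 1)) (star x * x) := by
          rw [cfc_mul _ _ (star x * x) (by fun_prop) (by fun_prop),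
            cfc_mul _ _ (star x * x) (by fun_prop) (by fun_prop)]
      _ = 0 := hcfc01
  have h1 : x * star x * x = x := by
    have hw : star (x * (star x * x) - x) * (x * (star x * x) - x)
        = ((star x * x) - 1) * (star x * x) * ((star x * x) - 1) := by
      have hsw : star (x * (star x * x) - x) = (star x * x) * star x - star x := by
        rw [star_sub, star_mul, hsa.star_eq]
      rw [hsw]
      noncomm_ring
    have hw0 : x * (star x * x) - x = 0 := by
      apply eq_zero_of_star_mul_self'
      rw [hw, hcfc01']
    have h2 : x * (star x * x) = x := by rwa [sub_eq_zero] at hw0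
    calc x * star x * x = x * (star x * x) := by noncomm_ring
      _ = x := h2
  refine ⟨h1, ?_⟩
  have hp' : (star x * x) * (star x * x) = star x * x := by
    have e : (star x * x) * (star x * x) = star x * (x * star x * x) := by noncomm_ring
    rw [e, h1]
  have hqx : (x * star x) * x = x := by
    have e : (x * star x) * x = x * star x * x := by noncomm_ring
    rw [e, h1]
  have hsa1 : star (1 - star x * x) = 1 - star x * x := by
    rw [star_sub, star_one, hsa.star_eq]
  have e2 : (1 - star x * x) * (1 - star x * x) = 1 - star x * x := by
    have e : (1 - star x * x) * (1 - star x * x)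
        = 1 - star x * x - star x * x + (star x * x) * (star x * x) := by noncomm_ring
    rw [e, hp']
    abel
  have key2 : ∀ a : A, ‖(1 - star x * x) * a * (1 - x * star x)‖ ≤ 1 →
      (1 - star x * x) * a * (1 - x * star x) = 0 := by
    intro a hd
    set d := (1 - star x * x) * a * (1 - x * star x) with hdef
    have hdx : d * x = 0 := by
      have e : d * x = (1 - star x * x) * a * (x - (x * star x) * x) := by
        rw [hdef]; noncomm_ring
      rw [e, hqx, sub_self, mul_zero]
    have hxsd : star x * star d = 0 := by
      have := congrArg star hdx
      rwa [star_mul, star_zero] at this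
    have hpd : (1 - star x * x) * d = d := by
      rw [hdef]
      have e : (1 - star x * x) * ((1 - star x * x) * a * (1 - x * star x))
          = ((1 - star x * x) * (1 - star x * x)) * a * (1 - x * star x) := by noncomm_ring
      rw [e, e2]
    have hsd1p : star d * (1 - star x * x) = star d := by
      have := congrArg star hpd
      rwa [star_mul, hsa1] at this
    have hr0 : (0:A) ≤ d * star d := mul_star_self_nonneg d
    have hrn : ‖d * star d‖ ≤ 1 := by
      rw [CStarRing.norm_self_mul_star]
      nlinarith [norm_nonneg d]
    have hr1 : d * star d ≤ 1 := (CStarAlgebra.norm_le_one_iff_of_nonneg _ hr0).mp hrn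
    have hconj := star_left_conjugate_le_conjugate hr1 (1 - star x * x)
    rw [hsa1, mul_one] at hconj
    have eL : (1 - star x * x) * (d * star d) * (1 - star x * x) = d * star d := by
      have e : (1 - star x * x) * (d * star d) * (1 - star x * x)
          = ((1 - star x * x) * d) * (star d * (1 - star x * x)) := by noncomm_ring
      rw [e, hpd, hsd1p]
    rw [eL, e2] at hconj
    -- hconj : d * star d ≤ 1 - star x * x
    have hsum_le : star x * x + d * star d ≤ 1 := by
      calc star x * x + d * star d ≤ star x * x + (1 - star x * x) := add_le_add_right hconj _
        _ = 1 := by abel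
    have hyy : star (x + star d) * (x + star d) ≤ 1 := by
      have e : star (x + star d) * (x + star d)
          = star x * x + star x * star d + d * x + d * star d := by
        rw [star_add, star_star]; noncomm_ring
      rw [e, hxsd, hdx, add_zero, add_zero]
      exact hsum_le
    have hzz : star (x - star d) * (x - star d) ≤ 1 := by
      have e : star (x - star d) * (x - star d)
          = star x * x - star x * star d - d * x + d * star d := by
        rw [star_sub, star_star]; noncomm_ring
      rw [e, hxsd, hdx, sub_zero, sub_zero]
      exact hsum_le
    have hxs : x = (2⁻¹ : ℝ) • ((x + star d) + (x - star d)) := by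
      have e : (x + star d) + (x - star d) = x + x := by abel
      rw [e, ← two_smul ℝ x, smul_smul]
      norm_num
    have h4 := (hext _ _ (norm_le_one_of_star_mul_self' hyy)
      (norm_le_one_of_star_mul_self' hzz) hxs).1
    have h5 : star d = 0 := by
      have := congrArg (· - x) h4
      simpa using this
    rw [← star_star d, h5, star_zero]
  intro a
  by_cases hd0 : (1 - star x * x) * a * (1 - x * star x) = 0
  · exact hd0
  · set n := ‖(1 - star x * x) * a * (1 - x * star x)‖ with hn
    have hn0 : 0 ≤ n := norm_nonneg _
    have hpos : (0:ℝ) < 1 + n := by linarith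
    have hscale : (1 - star x * x) * ((1 + n)⁻¹ • a) * (1 - x * star x)
        = (1 + n)⁻¹ • ((1 - star x * x) * a * (1 - x * star x)) := by
      rw [mul_smul_comm, smul_mul_assoc]
    have happ := key2 ((1 + n)⁻¹ • a) ?_
    · rw [hscale] at happ
      rcases smul_eq_zero.mp happ with h' | h'
      · exact absurd h' (by positivity)
      · exact h'
    · rw [hscale, norm_smul, Real.norm_eq_abs, abs_of_pos (by positivity), ← hn]
      rw [inv_mul_le_iff₀ hpos]
      linarith

end Aux

/-- In a unital C*-algebra, the set of (linear) extreme points of the closed unit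
ball is norm closed. -/
theorem extremePoints_closed {A : Type*} [NormedRing A] [StarRing A]
    [CStarRing A] [NormedAlgebra ℂ A] [CompleteSpace A] [StarModule ℂ A] :
    IsClosed {x : A | ‖x‖ ≤ 1 ∧
      ∀ y z : A, ‖y‖ ≤ 1 → ‖z‖ ≤ 1 → x = (2⁻¹ : ℝ) • (y + z) → y = x ∧ z = x} := by
  letI : CStarAlgebra A :=
    { ‹NormedRing A›, ‹StarRing A›, ‹CStarRing A›, ‹NormedAlgebra ℂ A›, ‹CompleteSpace A›,
      ‹StarModule ℂ A› with }
  letI := CStarAlgebra.spectralOrder A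
  haveI := CStarAlgebra.spectralOrderedRing A
  have hset : {x : A | ‖x‖ ≤ 1 ∧
        ∀ y z : A, ‖y‖ ≤ 1 → ‖z‖ ≤ 1 → x = (2⁻¹ : ℝ) • (y + z) → y = x ∧ z = x}
      = {x : A | x * star x * x = x} ∩
        ⋂ a : A, {x : A | (1 - star x * x) * a * (1 - x * star x) = 0} := by
    ext w
    simp only [Set.mem_setOf_eq, Set.mem_inter_iff, Set.mem_iInter]
    constructor
    · intro h
      exact alg_of_extreme h.1 h.2
    · intro h
      exact extreme_of_alg h.1 h.2
  rw [hset]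
  exact IsClosed.inter (isClosed_eq (by fun_prop) continuous_id)
    (isClosed_iInter fun a => isClosed_eq (by fun_prop) continuous_const)
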